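/- (The periodic Euler–Lagrange trajectory ξ(s) = (2n+1)π − s − sin s is not a minimiser.) Let n ≥ 1 be an integer, t = (2n+1)π, and let φ : ℝ → ℝ be any 2π-periodic function. For a piecewise continuously differentiable η : [0,t] → ℝ define the action A(η) = ½∫_0^t η'(s)² ds + ∫_0^t ( cos(sin s) − cos(η(s) + sin s) ) ds + φ(η(0)). Let ξ(s) = (2n+1)π − s − sin s, and let ψ(s) = π − 2s for 0 ≤ s ≤ π/2 and ψ(s) = 0 for π/2 < s ≤ t; both satisfy ξ(t) = ψ(t) = 0 and ξ'(0) = ψ'(0) = −2. Then A(ξ) = (6n+3)π/4 + ∫_0^{(2n+1)π} cos(sin s) ds + φ(π), A(ψ) ≤ 2π + φ(π), and A(ψ) < A(ξ). -/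

import Mathlib

open Real MeasureTheory

/-- **The periodic Euler–Lagrange trajectory `ξ(s) = (2n+1)π − s − sin s` is not a
minimiser.**  For `t = (2n+1)π` (`n ≥ 1`), `2π`-periodic `φ`, and the action
`A(η) = ½∫₀ᵗ η'² + ∫₀ᵗ (cos(sin s) − cos(η(s) + sin s)) ds + φ(η(0))`, the trajectories
`ξ(s) = (2n+1)π − s − sin s` and `ψ(s) = (π − 2s)·1_{s ≤ π/2}` share the boundary data
`ξ(t) = ψ(t) = 0`, `ξ'(0) = ψ'(0) = −2`, yet
`A(ξ) = (6n+3)π/4 + ∫₀^{(2n+1)π} cos(sin s) ds + φ(π)`, `A(ψ) ≤ 2π + φ(π)`, and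
`A(ψ) < A(ξ)`. -/
theorem periodic_trajectory_not_minimiser_odd
    (n : ℕ) (hn : 1 ≤ n)
    (φ : ℝ → ℝ) (hφ : ∀ y, φ (y + 2 * π) = φ y)
    (t : ℝ) (ht : t = (2 * n + 1) * π)
    (A : (ℝ → ℝ) → ℝ)
    (hA : ∀ η : ℝ → ℝ, A η = (1 / 2) * (∫ s in (0:ℝ)..t, (deriv η s) ^ 2)
        + (∫ s in (0:ℝ)..t, (Real.cos (Real.sin s) - Real.cos (η s + Real.sin s)))
        + φ (η 0))
    (ξ ψ : ℝ → ℝ)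
    (hξ : ∀ s, ξ s = (2 * n + 1) * π - s - Real.sin s)
    (hψ : ∀ s, ψ s = if s ≤ π / 2 then π - 2 * s else 0) :
    ξ t = 0 ∧ ψ t = 0 ∧ deriv ξ 0 = -2 ∧ deriv ψ 0 = -2 ∧
    A ξ = (6 * n + 3) * π / 4
        + (∫ s in (0:ℝ)..((2 * n + 1) * π), Real.cos (Real.sin s)) + φ π ∧
    A ψ ≤ 2 * π + φ π ∧
    A ψ < A ξ := by
  subst ht
  have hπ := Real.pi_pos
  have hn' : (1:ℝ) ≤ (n:ℝ) := by exact_mod_cast hn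
  set T : ℝ := (2 * (n:ℝ) + 1) * π with hT
  -- basic trig facts
  have hsinT : Real.sin T = 0 := by
    have h := Real.sin_nat_mul_pi (2 * n + 1)
    push_cast at h
    exact h
  have hcosT : Real.cos T = -1 := by
    have h := Real.cos_nat_mul_two_pi_add_pi n
    have hTeq : T = (n:ℝ) * (2 * π) + π := by rw [hT]; ring
    rw [hTeq, h]
  have hφT : φ T = φ π := by
    have hper : Function.Periodic φ (2 * π) := hφ
    have h := (hper.nat_mul n) π
    have hTeq : T = π + (n:ℝ) * (2 * π) := by rw [hT]; ring
    rw [hTeq, h]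
  have h02 : (0:ℝ) ≤ π / 2 := by positivity
  have h2T : π / 2 ≤ T := by nlinarith
  -- derivative of ξ
  have hξd : ∀ s, HasDerivAt ξ (-1 - Real.cos s) s := by
    intro s
    have hfe : ξ = fun u : ℝ => T - u - Real.sin u := funext hξ
    rw [hfe]
    have h1 : HasDerivAt (fun u : ℝ => T - u) (-1) s := by
      simpa using (hasDerivAt_id s).const_sub T
    exact h1.sub (Real.hasDerivAt_sin s)
  have hderξ : ∀ s, deriv ξ s = -1 - Real.cos s := fun s => (hξd s).deriv
  -- derivative of ψ away from π/2
  have hψd1 : ∀ s : ℝ, s < π / 2 → deriv ψ s = -2 := by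
    intro s hs
    have hev : ψ =ᶠ[nhds s] fun u => π - 2 * u := by
      filter_upwards [Iio_mem_nhds hs] with u hu
      rw [hψ u, if_pos (le_of_lt hu)]
    rw [hev.deriv_eq]
    have h : HasDerivAt (fun u : ℝ => π - 2 * u) (-2) s := by
      simpa using ((hasDerivAt_id s).const_mul (2:ℝ)).const_sub π
    exact h.deriv
  have hψd2 : ∀ s : ℝ, π / 2 < s → deriv ψ s = 0 := by
    intro s hs
    have hev : ψ =ᶠ[nhds s] fun _ => (0:ℝ) := by
      filter_upwards [Ioi_mem_nhds hs] with u hu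
      rw [hψ u, if_neg (not_le.mpr hu)]
    rw [hev.deriv_eq]
    exact deriv_const s 0
  have hψ0d : deriv ψ 0 = -2 := hψd1 0 (by positivity)
  -- continuity of ψ
  have hψmax : ψ = fun s => max (π - 2 * s) 0 := by
    funext s
    rw [hψ s]
    rcases le_or_gt s (π / 2) with h | h
    · rw [if_pos h, max_eq_left (by linarith)]
    · rw [if_neg (not_le.mpr h), max_eq_right (by linarith)]
  have hψc : Continuous ψ := by
    rw [hψmax]
    exact (continuous_const.sub (continuous_const.mul continuous_id)).max continuous_const
  -- kinetic integral of ψ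
  have haene : ∀ᵐ s : ℝ, s ≠ π / 2 := by
    rw [MeasureTheory.ae_iff]
    simpa using Real.volume_singleton (a := π / 2)
  have hae1 : ∀ᵐ s : ℝ, s ∈ Set.uIoc (0:ℝ) (π/2) → (deriv ψ s)^2 = 4 := by
    filter_upwards [haene] with s hne hmem
    rw [Set.uIoc_of_le h02] at hmem
    rw [hψd1 s (lt_of_le_of_ne hmem.2 hne)]
    norm_num
  have hint1 : IntervalIntegrable (fun s => (deriv ψ s)^2) volume 0 (π/2) := by
    apply (intervalIntegrable_const (c := (4:ℝ))).congr_ae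
    apply (MeasureTheory.ae_restrict_iff' measurableSet_uIoc).mpr
    filter_upwards [haene] with s hne hmem
    rw [Set.uIoc_of_le h02] at hmem
    rw [hψd1 s (lt_of_le_of_ne hmem.2 hne)]
    norm_num
  have hae2 : ∀ᵐ s : ℝ, s ∈ Set.uIoc (π/2) T → (deriv ψ s)^2 = 0 := by
    apply Filter.Eventually.of_forall
    intro s hmem
    rw [Set.uIoc_of_le h2T] at hmem
    rw [hψd2 s hmem.1]
    norm_num
  have hint2 : IntervalIntegrable (fun s => (deriv ψ s)^2) volume (π/2) T := by
    apply (intervalIntegrable_const (c := (0:ℝ))).congr_ae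
    apply (MeasureTheory.ae_restrict_iff' measurableSet_uIoc).mpr
    apply Filter.Eventually.of_forall
    intro s hmem
    rw [Set.uIoc_of_le h2T] at hmem
    simp [hψd2 s hmem.1]
  have hval1 : (∫ s in (0:ℝ)..(π/2), (deriv ψ s)^2) = 2 * π := by
    rw [intervalIntegral.integral_congr_ae hae1, intervalIntegral.integral_const]
    simp [smul_eq_mul]
    ring
  have hval2 : (∫ s in (π/2)..T, (deriv ψ s)^2) = 0 := by
    rw [intervalIntegral.integral_congr_ae hae2]
    simp
  have hkψ : (∫ s in (0:ℝ)..T, (deriv ψ s)^2) = 2 * π := by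
    rw [← intervalIntegral.integral_add_adjacent_intervals hint1 hint2, hval1, hval2]
    ring
  -- potential integral of ψ
  have hfc : Continuous (fun s => Real.cos (Real.sin s) - Real.cos (ψ s + Real.sin s)) :=
    (Real.continuous_cos.comp Real.continuous_sin).sub
      (Real.continuous_cos.comp (hψc.add Real.continuous_sin))
  have hpot2 : (∫ s in (π/2)..T, (Real.cos (Real.sin s) - Real.cos (ψ s + Real.sin s))) = 0 := by
    have hEq : Set.EqOn (fun s => Real.cos (Real.sin s) - Real.cos (ψ s + Real.sin s))
        (fun _ => (0:ℝ)) (Set.uIcc (π/2) T) := by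
      intro s hs
      rw [Set.uIcc_of_le h2T] at hs
      have hψs : ψ s = 0 := by
        rw [hψ s]
        rcases le_or_gt s (π/2) with h | h
        · have hse : s = π / 2 := le_antisymm h hs.1
          rw [if_pos h, hse]
          ring
        · rw [if_neg (not_le.mpr h)]
      simp [hψs]
    rw [intervalIntegral.integral_congr hEq]
    simp
  have hpot1 : (∫ s in (0:ℝ)..(π/2), (Real.cos (Real.sin s) - Real.cos (ψ s + Real.sin s))) ≤ π := by
    have hmono := intervalIntegral.integral_mono_on h02 (hfc.intervalIntegrable 0 (π/2))
      (intervalIntegrable_const (μ := volume) (c := (2:ℝ)))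
      (fun x _ => by
        have h1 := Real.cos_le_one (Real.sin x)
        have h2 := Real.neg_one_le_cos (ψ x + Real.sin x)
        linarith)
    rw [intervalIntegral.integral_const] at hmono
    simp [smul_eq_mul] at hmono
    linarith
  have hpotψ : (∫ s in (0:ℝ)..T, (Real.cos (Real.sin s) - Real.cos (ψ s + Real.sin s))) ≤ π := by
    rw [← intervalIntegral.integral_add_adjacent_intervals (hfc.intervalIntegrable 0 (π/2))
      (hfc.intervalIntegrable (π/2) T), hpot2]
    linarith
  have hψ0 : ψ 0 = π := by
    rw [hψ, if_pos h02]
    ring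
  have hAψ : A ψ ≤ 2 * π + φ π := by
    rw [hA ψ, hkψ, hψ0]
    linarith
  -- kinetic integral of ξ
  have hkξ : (∫ s in (0:ℝ)..T, (deriv ξ s)^2) = 3 * T / 2 := by
    have heq : ∀ s : ℝ, (deriv ξ s)^2 = 1 + 2 * Real.cos s + Real.cos s ^ 2 := by
      intro s
      rw [hderξ]
      ring
    simp_rw [heq]
    have i1 : IntervalIntegrable (fun _ : ℝ => (1:ℝ)) volume 0 T := intervalIntegrable_const
    have i2 : IntervalIntegrable (fun s : ℝ => 2 * Real.cos s) volume 0 T :=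
      (continuous_const.mul Real.continuous_cos).intervalIntegrable _ _
    have i3 : IntervalIntegrable (fun s : ℝ => Real.cos s ^ 2) volume 0 T :=
      (Real.continuous_cos.pow 2).intervalIntegrable _ _
    rw [intervalIntegral.integral_add (i1.add i2) i3, intervalIntegral.integral_add i1 i2,
        intervalIntegral.integral_const, intervalIntegral.integral_const_mul,
        integral_cos, integral_cos_sq]
    simp [hsinT]
    ring
  -- potential integral of ξ
  have hcosξ : ∀ s, Real.cos (ξ s + Real.sin s) = -Real.cos s := by
    intro s
    have h1 : ξ s + Real.sin s = T - s := by rw [hξ s]; ring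
    rw [h1, Real.cos_sub, hsinT, hcosT]
    ring
  have hpotξ : (∫ s in (0:ℝ)..T, (Real.cos (Real.sin s) - Real.cos (ξ s + Real.sin s)))
      = ∫ s in (0:ℝ)..T, Real.cos (Real.sin s) := by
    have heq : ∀ s : ℝ, Real.cos (Real.sin s) - Real.cos (ξ s + Real.sin s)
        = Real.cos (Real.sin s) + Real.cos s := by
      intro s
      rw [hcosξ]
      ring
    simp_rw [heq]
    have hcs : Continuous fun s : ℝ => Real.cos (Real.sin s) :=
      Real.continuous_cos.comp Real.continuous_sin
    rw [intervalIntegral.integral_add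
      (hcs.intervalIntegrable _ _)
      (Real.continuous_cos.intervalIntegrable _ _), integral_cos]
    simp [hsinT]
  have hξ0' : ξ 0 = T := by rw [hξ]; simp
  have hAξ : A ξ = (6 * n + 3) * π / 4 + (∫ s in (0:ℝ)..T, Real.cos (Real.sin s)) + φ π := by
    rw [hA ξ, hkξ, hpotξ, hξ0', hφT, hT]
    ring
  -- nonnegativity of ∫ cos (sin s)
  have hTnn : (0:ℝ) ≤ T := by rw [hT]; positivity
  have hInonneg : 0 ≤ ∫ s in (0:ℝ)..T, Real.cos (Real.sin s) := by
    apply intervalIntegral.integral_nonneg hTnn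
    intro s _
    apply Real.cos_nonneg_of_mem_Icc
    constructor
    · have := Real.neg_one_le_sin s
      nlinarith [Real.pi_gt_three]
    · have := Real.sin_le_one s
      nlinarith [Real.pi_gt_three]
  -- conclusion
  refine ⟨?_, ?_, ?_, hψ0d, hAξ, hAψ, ?_⟩
  · rw [hξ]
    rw [hsinT]
    ring
  · rw [hψ, if_neg (by push_neg; nlinarith)]
  · rw [hderξ 0, Real.cos_zero]
    norm_num
  · rw [hAξ]
    have h9 : 9 * π ≤ (6 * (n:ℝ) + 3) * π :=
      mul_le_mul_of_nonneg_right (by linarith) hπ.le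
    linarith
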